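/- arXiv:2112.07120 — 2 statements merged into one kernel-verified Lean document; each statement's English description precedes it below -/
import Mathlib

section
/- Fix δ ∈ (0,1) and γ > δ². If c > 0 satisfies e^{cγ} ≥ 1 + δ²(e^c − 1), and f : ℕ × ℕ → ℝ satisfies f(i,0) = 1 for all i, f(0,j) = 0 for j ≥ 1, 0 ≤ f(i,j), and f(i,j) ≤ f(i−1,j) + δ²(f(i−1,j−1) − f(i−1,j)) for all i,j ≥ 1 (with f(i−1,j−1) ≥ f(i−1,j) ≥ 0), then f(i,j) ≤ e^{c(γi − j)} for all (i,j). -/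
theorem sdpi_exponential_decay
    (δ γ c : ℝ) (hδ0 : 0 < δ) (hδ1 : δ < 1) (hγ : δ ^ 2 < γ) (hc : 0 < c)
    (hceq : 1 + δ ^ 2 * (Real.exp c - 1) ≤ Real.exp (c * γ))
    (f : ℕ → ℕ → ℝ)
    (hf0 : ∀ i, f i 0 = 1)
    (hf00 : ∀ j, 1 ≤ j → f 0 j = 0)
    (hfnn : ∀ i j, 0 ≤ f i j)
    (hfmono : ∀ i j, f i (j + 1) ≤ f i j)
    (hrec : ∀ i j, f (i + 1) (j + 1) ≤ f i (j + 1) + δ ^ 2 * (f i j - f i (j + 1))) :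
    ∀ i j, f i j ≤ Real.exp (c * (γ * i - j)) := by
  have hγ0 : 0 < γ := lt_trans (by positivity) hγ
  intro i
  induction i with
  | zero =>
    intro j
    cases j with
    | zero =>
      rw [hf0]
      simp
    | succ k =>
      rw [hf00 (k + 1) (by omega)]
      positivity
  | succ i ih =>
    intro j
    cases j with
    | zero =>
      rw [hf0, ← Real.exp_zero]
      apply Real.exp_le_exp.mpr
      push_cast
      simp only [sub_zero]
      positivity
    | succ k =>
      have h1 := hrec i k
      have h2 := ih k
      have h3 := ih (k + 1)
      have hδ2 : δ ^ 2 < 1 := by nlinarith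
      calc f (i + 1) (k + 1)
          ≤ (1 - δ ^ 2) * f i (k + 1) + δ ^ 2 * f i k := by nlinarith
        _ ≤ (1 - δ ^ 2) * Real.exp (c * (γ * i - (k + 1))) + δ ^ 2 * Real.exp (c * (γ * i - k)) := by
            push_cast at h3
            gcongr <;> linarith
        _ = Real.exp (c * (γ * i - ((k : ℝ) + 1))) * (1 + δ ^ 2 * (Real.exp c - 1)) := by
            rw [show c * (γ * i - (k : ℝ)) = c * (γ * i - ((k : ℝ) + 1)) + c by ring,
              Real.exp_add]
            ring
        _ ≤ Real.exp (c * (γ * i - ((k : ℝ) + 1))) * Real.exp (c * γ) := by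
            exact mul_le_mul_of_nonneg_left hceq (Real.exp_nonneg _)
        _ = Real.exp (c * (γ * (i + 1 : ℕ) - ((k + 1 : ℕ) : ℝ))) := by
            rw [← Real.exp_add]
            push_cast
            ring_nf
end

section
/- Let c > 1 and define a sequence by ε₀ ≤ (1/(4c))·3⁻⁸ and ε_l ≤ (1/8)(l+2)⁸ ε_{l−1}² for l ≥ 1. Then ε_l ≤ (c^{−2^l}/4)·(l+3)⁻⁸ for all l ≥ 0. -/
theorem multibit_error_induction
    (c : ℝ) (hc : 1 < c) (ε : ℕ → ℝ) (hnn : ∀ l, 0 ≤ ε l)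
    (h0 : ε 0 ≤ 1 / (4 * c) * (1 / 3 ^ 8))
    (hrec : ∀ l : ℕ, 1 ≤ l → ε l ≤ 1 / 8 * ((l : ℝ) + 2) ^ 8 * ε (l - 1) ^ 2) :
    ∀ l : ℕ, ε l ≤ 1 / (4 * c ^ (2 ^ l)) * (1 / ((l : ℝ) + 3) ^ 8) := by
  have hc0 : (0 : ℝ) < c := lt_trans zero_lt_one hc
  intro l
  induction l with
  | zero => simpa using h0
  | succ n ih =>
    have hA : (0 : ℝ) < c ^ (2 ^ n) := pow_pos hc0 _
    have hn3 : (0 : ℝ) < ((n : ℝ) + 3) ^ 8 := by positivity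
    have hn4 : (0 : ℝ) < ((n : ℝ) + 4) ^ 8 := by positivity
    have h1 := hrec (n + 1) (by omega)
    simp only [Nat.add_sub_cancel, Nat.cast_add, Nat.cast_one] at h1
    have hcast : ((n : ℝ) + 1 + 2) = (n : ℝ) + 3 := by ring
    rw [hcast] at h1
    -- square the IH
    have hsq : ε n ^ 2 ≤ (1 / (4 * c ^ (2 ^ n)) * (1 / ((n : ℝ) + 3) ^ 8)) ^ 2 := by
      have := hnn n
      exact pow_le_pow_left₀ this ih 2
    have hA2 : c ^ (2 ^ (n + 1)) = (c ^ (2 ^ n)) ^ 2 := by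
      rw [pow_succ, pow_mul]
    have hstep : ε (n + 1) ≤ 1 / (128 * (c ^ (2 ^ n)) ^ 2 * ((n : ℝ) + 3) ^ 8) := by
      calc ε (n + 1) ≤ 1 / 8 * ((n : ℝ) + 3) ^ 8 * ε n ^ 2 := h1
        _ ≤ 1 / 8 * ((n : ℝ) + 3) ^ 8 *
              (1 / (4 * c ^ (2 ^ n)) * (1 / ((n : ℝ) + 3) ^ 8)) ^ 2 := by
            apply mul_le_mul_of_nonneg_left hsq
            positivity
        _ = 1 / (128 * (c ^ (2 ^ n)) ^ 2 * ((n : ℝ) + 3) ^ 8) := by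
            field_simp
            ring
    have hratio : ((n : ℝ) + 4) ^ 8 ≤ 32 * ((n : ℝ) + 3) ^ 8 := by
      have h43 : (n : ℝ) + 4 ≤ 4 / 3 * ((n : ℝ) + 3) := by
        have : (0 : ℝ) ≤ (n : ℝ) := Nat.cast_nonneg n
        linarith
      have h2 : ((n : ℝ) + 4) ^ 8 ≤ (4 / 3 * ((n : ℝ) + 3)) ^ 8 :=
        pow_le_pow_left₀ (by positivity) h43 8
      have h3 : (4 / 3 * ((n : ℝ) + 3)) ^ 8 = (4 / 3 : ℝ) ^ 8 * ((n : ℝ) + 3) ^ 8 := by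
        ring
      nlinarith [hn3]
    have hgoal : 1 / (128 * (c ^ (2 ^ n)) ^ 2 * ((n : ℝ) + 3) ^ 8)
        ≤ 1 / (4 * (c ^ (2 ^ n)) ^ 2 * ((n : ℝ) + 4) ^ 8) := by
      apply one_div_le_one_div_of_le (by positivity)
      nlinarith [sq_nonneg (c ^ (2 ^ n)), hA]
    have hfin : ε (n + 1) ≤ 1 / (4 * (c ^ (2 ^ n)) ^ 2 * ((n : ℝ) + 4) ^ 8) :=
      le_trans hstep hgoal
    have hcast2 : ((n : ℝ) + 1 + 3) = (n : ℝ) + 4 := by ring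
    rw [hA2]
    push_cast
    rw [hcast2]
    calc ε (n + 1) ≤ 1 / (4 * (c ^ (2 ^ n)) ^ 2 * ((n : ℝ) + 4) ^ 8) := hfin
      _ = 1 / (4 * (c ^ (2 ^ n)) ^ 2) * (1 / ((n : ℝ) + 4) ^ 8) := by
          field_simp
end
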